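/- Let k be a commutative ring and R = k[x, y] the polynomial ring in two variables. Consider the k-linear map φ: R[1/x] ⊕ R[1/y] → R[1/(x*y)] given by φ(f, g) = f - g (images under the localization maps). Then the cokernel of φ is a free k-module with basis given by the images of the monomials x^{-i}*y^{-j} for i ≥ 1, j ≥ 1. -/

import Mathlib

theorem stmt4 (k : Type*) [CommRing k]
    (A B : Submodule k (AddMonoidAlgebra k (ℤ × ℤ)))
    (hA : A = Submodule.span k {m : AddMonoidAlgebra k (ℤ × ℤ) |
      ∃ i j : ℤ, 0 ≤ j ∧ m = AddMonoidAlgebra.single (i, j) (1 : k)})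
    (hB : B = Submodule.span k {m : AddMonoidAlgebra k (ℤ × ℤ) |
      ∃ i j : ℤ, 0 ≤ i ∧ m = AddMonoidAlgebra.single (i, j) (1 : k)})
    (φ : (A × B) →ₗ[k] AddMonoidAlgebra k (ℤ × ℤ))
    (hφ : ∀ p : A × B, φ p =
      (p.1 : AddMonoidAlgebra k (ℤ × ℤ)) - (p.2 : AddMonoidAlgebra k (ℤ × ℤ))) :
    ∃ b : Module.Basis {p : ℤ × ℤ // p.1 ≤ -1 ∧ p.2 ≤ -1} k
        (AddMonoidAlgebra k (ℤ × ℤ) ⧸ LinearMap.range φ),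
      ∀ p, b p = Submodule.Quotient.mk (AddMonoidAlgebra.single p.val (1 : k)) := by
  classical
  set S : Set (ℤ × ℤ) := {p | p.1 ≤ -1 ∧ p.2 ≤ -1} with hS
  let L : AddMonoidAlgebra k (ℤ × ℤ) ≃ₗ[k] (ℤ × ℤ →₀ k) := AddMonoidAlgebra.coeffLinearEquiv k
  -- the range of φ equals the supported module on Sᶜ
  have hAle : A ≤ (Finsupp.supported k k Sᶜ).comap L.toLinearMap := by
    rw [hA, Submodule.span_le]
    rintro _ ⟨i, j, hj, rfl⟩
    change Finsupp.single (i, j) (1:k) ∈ Finsupp.supported k k Sᶜ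
    refine Finsupp.single_mem_supported k 1 ?_
    simp only [hS, Set.mem_compl_iff, Set.mem_setOf_eq, not_and, not_le]
    intro _; omega
  have hBle : B ≤ (Finsupp.supported k k Sᶜ).comap L.toLinearMap := by
    rw [hB, Submodule.span_le]
    rintro _ ⟨i, j, hi, rfl⟩
    change Finsupp.single (i, j) (1:k) ∈ Finsupp.supported k k Sᶜ
    refine Finsupp.single_mem_supported k 1 ?_
    simp only [hS, Set.mem_compl_iff, Set.mem_setOf_eq, not_and, not_le]
    intro h; omega
  have hrange : LinearMap.range φ = (Finsupp.supported k k Sᶜ).comap L.toLinearMap := by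
    apply le_antisymm
    · rintro _ ⟨⟨a, b⟩, rfl⟩
      rw [hφ]
      exact sub_mem (hAle a.2) (hBle b.2)
    · rw [Submodule.comap_equiv_eq_map_symm, Finsupp.supported_eq_span_single,
        Submodule.map_span, Submodule.span_le]
      rintro _ ⟨_, ⟨p, hp, rfl⟩, rfl⟩
      change AddMonoidAlgebra.single p (1:k) ∈ _
      simp only [hS, Set.mem_compl_iff, Set.mem_setOf_eq, not_and, not_le] at hp
      by_cases hj : (0:ℤ) ≤ p.2
      · have hmA : (AddMonoidAlgebra.single p (1:k)) ∈ A := by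
          rw [hA]; exact Submodule.subset_span ⟨p.1, p.2, hj, by simp⟩
        exact ⟨(⟨_, hmA⟩, 0), by simp [hφ]⟩
      · have hi : (0:ℤ) ≤ p.1 := by
          by_contra hi
          exact hj (hp (by omega))
        have hmB : (AddMonoidAlgebra.single p (1:k)) ∈ B := by
          rw [hB]; exact Submodule.subset_span ⟨p.1, p.2, hi, by simp⟩
        refine ⟨(0, ⟨-(AddMonoidAlgebra.single p (1:k)), neg_mem hmB⟩), ?_⟩
        simp [hφ]
  -- restrictDom to S has kernel supported Sᶜ and is surjective
  have hker : LinearMap.range φ = LinearMap.ker (Finsupp.restrictDom k k S ∘ₗ L.toLinearMap) := by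
    rw [hrange]
    ext f0
    change L f0 ∈ Finsupp.supported k k Sᶜ ↔ Finsupp.restrictDom k k S (L f0) = 0
    generalize L f0 = f
    simp only [LinearMap.mem_ker, Finsupp.mem_supported']
    rw [show ((Finsupp.restrictDom k k S) f = 0) ↔ Finsupp.filter (· ∈ S) f = 0 by
      rw [← Subtype.coe_inj]; simp]
    rw [Finsupp.filter_eq_zero_iff]
    constructor
    · intro h x hx
      exact h x (by simpa using hx)
    · intro h x hx
      exact h x (by simpa using hx)
  have hsurj : Function.Surjective (Finsupp.restrictDom k k S ∘ₗ L.toLinearMap) :=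
    (LinearMap.range_eq_top.1 (Finsupp.range_restrictDom S)).comp L.surjective
  let e2 := LinearMap.quotKerEquivOfSurjective (M := AddMonoidAlgebra k (ℤ × ℤ))
    (M₂ := Finsupp.supported k k S) (Finsupp.restrictDom k k S ∘ₗ L.toLinearMap) hsurj
  let e : (AddMonoidAlgebra k (ℤ × ℤ) ⧸ LinearMap.range φ) ≃ₗ[k] (↥S →₀ k) :=
    (Submodule.quotEquivOfEq _ _ hker) ≪≫ₗ
      e2 ≪≫ₗ
      Finsupp.supportedEquivFinsupp S
  refine ⟨(Finsupp.basisSingleOne).map e.symm, fun p => ?_⟩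
  simp only [Module.Basis.map_apply, Finsupp.coe_basisSingleOne]
  rw [LinearEquiv.symm_apply_eq]
  have hmk : e (Submodule.Quotient.mk (AddMonoidAlgebra.single p.val (1:k))) =
      Finsupp.subtypeDomain (· ∈ S)
        ((Finsupp.supported k k S).subtype
          ((Finsupp.restrictDom k k S) (Finsupp.single p.val (1:k)))) := rfl
  refine Eq.symm (hmk.trans ?_)
  rw [show ((Finsupp.supported k k S).subtype
      ((Finsupp.restrictDom k k S) (Finsupp.single p.val (1:k)))) =
      Finsupp.filter (· ∈ S) (Finsupp.single p.val (1:k)) from rfl]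
  rw [Finsupp.filter_single_of_pos (fun x => x ∈ S) (show p.val ∈ S from p.2)]
  ext q
  rcases q with ⟨q, hq⟩
  simp [Finsupp.single_apply, Subtype.ext_iff]
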